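/- Let (X,f,R) be a twisted Yang-Baxter set and, for an integer t, define T^tR(x,y) = (R_1(x, f^t(y)), R_2(f^{-t}(x), y)). Then (X, f, T^tR) is again a twisted Yang-Baxter set; in particular T^tR satisfies the set-theoretic Yang-Baxter equation and (f×f)∘T^tR = T^tR∘(f×f). -/

import Mathlib

namespace TwistedYB

variable {X : Type*}

/-- `R` acting on the first two factors of `X × X × X`. -/
def Rxx (R : X × X → X × X) : X × X × X → X × X × X :=
  fun p => ((R (p.1, p.2.1)).1, (R (p.1, p.2.1)).2, p.2.2)

/-- `R` acting on the last two factors of `X × X × X`. -/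
def xxR (R : X × X → X × X) : X × X × X → X × X × X :=
  fun p => (p.1, (R (p.2.1, p.2.2)).1, (R (p.2.1, p.2.2)).2)

/-- The set-theoretic Yang-Baxter equation. -/
def YBE (R : X × X → X × X) : Prop :=
  Rxx R ∘ xxR R ∘ Rxx R = xxR R ∘ Rxx R ∘ xxR R

/-- `f` commutes with `R`, i.e. `(f × f) ∘ R = R ∘ (f × f)`. -/
def CommutesWith (f : X → X) (R : X × X → X × X) : Prop :=
  ∀ p : X × X, R (f p.1, f p.2) = (f (R p).1, f (R p).2)

/-- The `t`-twisted operator `T^tR(x,y) = (R₁(x, f^t y), R₂(f^{-t} x, y))`. -/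
def TtR (f : Equiv.Perm X) (R : X × X → X × X) (t : ℤ) : X × X → X × X :=
  fun p => ((R (p.1, (f ^ t) p.2)).1, (R ((f ^ (-t)) p.1, p.2)).2)

lemma comm_zpow (R : X × X → X × X) (f : Equiv.Perm X)
    (hcomm : CommutesWith f R) (n : ℤ) :
    ∀ x y : X, R ((f ^ n) x, (f ^ n) y) = ((f ^ n) (R (x, y)).1, (f ^ n) (R (x, y)).2) := by
  have hinv : ∀ x y : X, R (f⁻¹ x, f⁻¹ y) = (f⁻¹ (R (x, y)).1, f⁻¹ (R (x, y)).2) := by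
    intro x y
    have h := hcomm (f⁻¹ x, f⁻¹ y)
    simp only [← Equiv.Perm.mul_apply, mul_inv_cancel, Equiv.Perm.one_apply] at h
    rw [h]
    simp
  induction n using Int.induction_on with
  | zero => simp
  | succ i ih =>
      intro x y
      have h1 : (f ^ ((i : ℤ) + 1)) = f ^ (i : ℤ) * f := by
        rw [zpow_add_one]
      simp only [h1, Equiv.Perm.mul_apply]
      rw [ih (f x) (f y), hcomm (x, y)]
  | pred i ih =>
      intro x y
      have h1 : (f ^ (-(i : ℤ) - 1)) = f ^ (-(i : ℤ)) * f⁻¹ := by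
        rw [zpow_sub_one]
      simp only [h1, Equiv.Perm.mul_apply]
      rw [ih (f⁻¹ x) (f⁻¹ y), hinv x y]

theorem TtR_twisted_YB (R : X × X → X × X) (f : Equiv.Perm X) (t : ℤ)
    (hbij : Function.Bijective R) (hYB : YBE R) (hcomm : CommutesWith f R) :
    YBE (TtR f R t) ∧ CommutesWith f (TtR f R t) := by
  have hc1 : ∀ x : X, (f ^ t) ((f ^ (-t)) x) = x := by
    intro x
    have h : (f ^ t) * (f ^ (-t)) = 1 := by rw [← zpow_add]; simp
    calc (f ^ t) ((f ^ (-t)) x) = ((f ^ t) * (f ^ (-t))) x := rfl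
    _ = x := by rw [h]; rfl
  have hc2 : ∀ x : X, (f ^ (-t)) ((f ^ t) x) = x := by
    intro x
    have h : (f ^ (-t)) * (f ^ t) = 1 := by rw [← zpow_add]; simp
    calc (f ^ (-t)) ((f ^ t) x) = ((f ^ (-t)) * (f ^ t)) x := rfl
    _ = x := by rw [h]; rfl
  have pd1 : ∀ a b : X, R (a, (f ^ t) b)
      = ((f ^ t) (R ((f ^ (-t)) a, b)).1, (f ^ t) (R ((f ^ (-t)) a, b)).2) := by
    intro a b
    have h := comm_zpow R f hcomm t ((f ^ (-t)) a) b
    rw [hc1] at h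
    exact h
  have pd2 : ∀ a b : X, R (a, (f ^ (-t)) b)
      = ((f ^ (-t)) (R ((f ^ t) a, b)).1, (f ^ (-t)) (R ((f ^ t) a, b)).2) := by
    intro a b
    have h := comm_zpow R f hcomm (-t) ((f ^ t) a) b
    rw [hc2] at h
    exact h
  have hf1 : ∀ x : X, (f ^ t) (f x) = f ((f ^ t) x) := by
    intro x
    have h : f ^ t * f = f * f ^ t := (Commute.self_zpow f t).symm.eq
    calc (f ^ t) (f x) = (f ^ t * f) x := rfl
    _ = (f * f ^ t) x := by rw [h]
    _ = f ((f ^ t) x) := rfl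
  have hf2 : ∀ x : X, (f ^ (-t)) (f x) = f ((f ^ (-t)) x) := by
    intro x
    have h : f ^ (-t) * f = f * f ^ (-t) := (Commute.self_zpow f (-t)).symm.eq
    calc (f ^ (-t)) (f x) = (f ^ (-t) * f) x := rfl
    _ = (f * f ^ (-t)) x := by rw [h]
    _ = f ((f ^ (-t)) x) := rfl
  constructor
  · funext p
    obtain ⟨x, y, z⟩ := p
    have hM := congrFun hYB ((f ^ (-t)) ((f ^ (-t)) x), (f ^ (-t)) y, z)
    simp only [Function.comp_apply, Rxx, xxR] at hM
    simp only [Function.comp_apply, Rxx, xxR, TtR]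
    simp only [pd1, pd2, hc1, hc2] at hM ⊢
    simp only [Prod.mk.injEq] at hM
    obtain ⟨h1, h2, h3⟩ := hM
    rw [h1, h2, h3]
  · intro p
    obtain ⟨x, y⟩ := p
    simp only [TtR]
    rw [hf1, hf2, hcomm (x, (f ^ t) y), hcomm ((f ^ (-t)) x, y)]

end TwistedYB
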